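/- Let r₁, …, r_n be positive integers, let α ∈ (0,1) ∪ (1,∞), and let λ₁, …, λ_n be nonnegative reals with ∑_i λ_i r_i = 1. Then (1/(1−α)) log₂ ∑_i λ_i^α r_i^{2−α} ≤ 2 log₂ ‖r‖₂, where ‖r‖₂ = √(∑_i r_i²); moreover equality holds for the choice λ_i = r_i / ∑_j r_j². (For a catalysis with degeneracy vector (r₁, …, r_n), the maximal catalytic Rényi entropy of a compatible catalyst is 2 log₂ ‖r‖₂.) -/

import Mathlib

open scoped Matrix Kronecker BigOperators Classical ComplexOrder

/-- A density matrix: positive semidefinite with unit trace. -/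
noncomputable def IsDensity {n : Type*} [Fintype n] (ρ : Matrix n n ℂ) : Prop :=
  ρ.PosSemidef ∧ ρ.trace = 1

/-- A unitary matrix. -/
noncomputable def IsUnitary {n : Type*} [Fintype n] [DecidableEq n] (U : Matrix n n ℂ) : Prop :=
  U * Uᴴ = 1 ∧ Uᴴ * U = 1

/-- Partial trace over the first tensor factor. -/
noncomputable def trFst {α β : Type*} [Fintype α] (M : Matrix (α × β) (α × β) ℂ) : Matrix β β ℂ :=
  Matrix.of fun k l => ∑ i, M (i, k) (i, l)

/-- Partial trace over the second tensor factor. -/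
noncomputable def trSnd {α β : Type*} [Fintype β] (M : Matrix (α × β) (α × β) ℂ) : Matrix α α ℂ :=
  Matrix.of fun i j => ∑ k, M (i, k) (j, k)

/-- Partial trace over the third factor of a tripartite system. -/
noncomputable def trThird {α β γ : Type*} [Fintype γ] (M : Matrix (α × β × γ) (α × β × γ) ℂ) :
    Matrix (α × β) (α × β) ℂ :=
  Matrix.of fun p q => ∑ k, M (p.1, p.2, k) (q.1, q.2, k)

/-- von Neumann entropy (base-2), with the convention `0 log 0 = 0`. -/
noncomputable def vnEntropy {n : Type*} [Fintype n] [DecidableEq n] (ρ : Matrix n n ℂ) : ℝ :=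
  if h : ρ.IsHermitian then -∑ i, h.eigenvalues i * Real.logb 2 (h.eigenvalues i) else 0

/-- Largest eigenvalue of a (Hermitian) matrix. -/
noncomputable def maxEig {n : Type*} [Fintype n] [DecidableEq n] (ρ : Matrix n n ℂ) : ℝ :=
  if h : ρ.IsHermitian then ⨆ i, h.eigenvalues i else 0

/-- Min-entropy of a density matrix. -/
noncomputable def minEntropy {n : Type*} [Fintype n] [DecidableEq n] (ρ : Matrix n n ℂ) : ℝ :=
  -Real.logb 2 (maxEig ρ)

/-- Rényi entropy of order `α` (base 2). -/
noncomputable def renyiEntropy {n : Type*} [Fintype n] [DecidableEq n] (α : ℝ)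
    (ρ : Matrix n n ℂ) : ℝ :=
  if h : ρ.IsHermitian then (1 - α)⁻¹ * Real.logb 2 (∑ i, h.eigenvalues i ^ α) else 0

/-- Partial transpose over the first tensor factor. -/
noncomputable def ptFst {α β : Type*} (U : Matrix (α × β) (α × β) ℂ) : Matrix (α × β) (α × β) ℂ :=
  Matrix.of fun p q => U (q.1, p.2) (p.1, q.2)

/-- Swap the two parties of a bipartite matrix. -/
noncomputable def swapParties {α β : Type*} (U : Matrix (α × β) (α × β) ℂ) : Matrix (β × α) (β × α) ℂ :=
  Matrix.of fun p q => U (p.2, p.1) (q.2, q.1)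

/-- `U` is compatible with the catalyst `σ`: there is a unitary `V` on `B` such that
`Tr_A (U (ρ ⊗ σ) U†) = V σ V†` for every density matrix `ρ` on `A`. -/
noncomputable def Compatible {dA dB : ℕ} (U : Matrix (Fin dA × Fin dB) (Fin dA × Fin dB) ℂ)
    (σ : Matrix (Fin dB) (Fin dB) ℂ) : Prop :=
  ∃ V : Matrix (Fin dB) (Fin dB) ℂ, IsUnitary V ∧
    ∀ ρ : Matrix (Fin dA) (Fin dA) ℂ, IsDensity ρ →
      trFst (U * (ρ ⊗ₖ σ) * Uᴴ) = V * σ * Vᴴ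

/-- The unitary `1_m ⊗ U` on `ℂ^m ⊗ ℂ^{dA} ⊗ ℂ^{dB}`, indexed as `(Fin m × Fin dA) × Fin dB`. -/
noncomputable def extUnitary {m dA dB : ℕ} (U : Matrix (Fin dA × Fin dB) (Fin dA × Fin dB) ℂ) :
    Matrix ((Fin m × Fin dA) × Fin dB) ((Fin m × Fin dA) × Fin dB) ℂ :=
  Matrix.of fun p q => if p.1.1 = q.1.1 then U (p.1.2, p.2) (q.1.2, q.2) else 0

/-- Corollary 6: for a catalysis with degeneracy vector `(r₁,…,r_n)`, the maximal catalytic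
Rényi entropy of a compatible catalyst is `2 log₂ ‖r‖₂`, achieved at `λᵢ = rᵢ/∑ⱼ rⱼ²`. -/
theorem stmt14 {n : ℕ} (r : Fin n → ℕ) (hr : ∀ i, 0 < r i)
    (α : ℝ) (hα0 : 0 < α) (hα1 : α ≠ 1)
    (lam : Fin n → ℝ) (hlam : ∀ i, 0 ≤ lam i)
    (hsum : ∑ i, lam i * (r i : ℝ) = 1) :
    (1 - α)⁻¹ * Real.logb 2 (∑ i, lam i ^ α * (r i : ℝ) ^ (2 - α)) ≤
      2 * Real.logb 2 (Real.sqrt (∑ i, (r i : ℝ) ^ 2)) ∧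
    (1 - α)⁻¹ * Real.logb 2
        (∑ i, ((r i : ℝ) / (∑ j, (r j : ℝ) ^ 2)) ^ α * (r i : ℝ) ^ (2 - α)) =
      2 * Real.logb 2 (Real.sqrt (∑ i, (r i : ℝ) ^ 2)) := by
  classical
  -- basic positivity facts
  have hri : ∀ i, (0:ℝ) < (r i : ℝ) := fun i => by exact_mod_cast hr i
  have hne : Nonempty (Fin n) := by
    by_contra h
    rw [Finset.univ_eq_empty_iff.mpr (not_nonempty_iff.mp h)] at hsum
    simp at hsum
  set R : ℝ := ∑ i, (r i : ℝ) ^ 2 with hRdef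
  have hRpos : 0 < R := Finset.sum_pos (fun i _ => pow_pos (hri i) 2) Finset.univ_nonempty
  have h1α : (1:ℝ) - α ≠ 0 := fun h => hα1 (by linarith)
  -- RHS simplification
  have hrhs : 2 * Real.logb 2 (Real.sqrt R) = Real.logb 2 R := by
    rw [show ((2:ℝ) * Real.logb 2 (Real.sqrt R)) = ((2:ℕ):ℝ) * Real.logb 2 (Real.sqrt R) by
      norm_num, ← Real.logb_pow, Real.sq_sqrt hRpos.le]
  have hlogR : Real.logb 2 (R ^ (1 - α)) = (1 - α) * Real.logb 2 R :=
    Real.logb_rpow_eq_mul_logb_of_pos hRpos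
  -- key term identity
  have hterm : ∀ i, lam i ^ α * (r i : ℝ) ^ (2 - α)
      = (lam i * (r i : ℝ)) ^ α * (((r i : ℝ)) ^ 2 : ℝ) ^ (1 - α) := by
    intro i
    have h2 : ((r i : ℝ)) ^ 2 = (r i : ℝ) ^ ((2:ℕ):ℝ) := (Real.rpow_natCast _ 2).symm
    rw [h2, Real.mul_rpow (hlam i) (hri i).le, ← Real.rpow_mul (hri i).le, mul_assoc,
      ← Real.rpow_add (hri i)]
    congr 1
    push_cast
    ring
  set S : ℝ := ∑ i, (lam i * (r i : ℝ)) ^ α * (((r i : ℝ)) ^ 2 : ℝ) ^ (1 - α) with hSdef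
  have hSsum : (∑ i, lam i ^ α * (r i : ℝ) ^ (2 - α)) = S :=
    Finset.sum_congr rfl fun i _ => hterm i
  have hw : ∀ i, (0:ℝ) < ((r i : ℝ)) ^ 2 := fun i => pow_pos (hri i) 2
  -- S is positive
  have hex : ∃ i, 0 < lam i * (r i : ℝ) := by
    by_contra h
    push_neg at h
    have h2 : (∑ i, lam i * (r i : ℝ)) ≤ 0 := Finset.sum_nonpos fun i _ => h i
    rw [hsum] at h2; linarith
  obtain ⟨i₀, hi₀⟩ := hex
  have hSpos : 0 < S := by
    refine Finset.sum_pos' (fun i _ => mul_nonneg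
      (Real.rpow_nonneg (mul_nonneg (hlam i) (hri i).le) _)
      (Real.rpow_nonneg (hw i).le _)) ⟨i₀, Finset.mem_univ i₀, ?_⟩
    exact mul_pos (Real.rpow_pos_of_pos hi₀ _) (Real.rpow_pos_of_pos (hw i₀) _)
  constructor
  · -- the inequality
    rw [hSsum, hrhs]
    rcases lt_or_gt_of_ne hα1 with hlt | hgt
    · -- α < 1 : Hölder gives S ≤ R^(1-α)
      have h1αpos : 0 < 1 - α := by linarith
      have hconj : Real.HolderConjugate (1/α) (1/(1-α)) := by
        rw [Real.holderConjugate_iff]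
        constructor
        · rw [lt_div_iff₀ hα0]; linarith
        · simp only [one_div, inv_inv]; ring
      have key := Real.inner_le_Lp_mul_Lq Finset.univ
        (fun i => (lam i * (r i : ℝ)) ^ α)
        (fun i => (((r i : ℝ)) ^ 2 : ℝ) ^ (1 - α)) hconj
      simp only [one_div, inv_inv] at key
      have hf : ∀ i ∈ Finset.univ (α := Fin n),
          |(lam i * (r i : ℝ)) ^ α| ^ α⁻¹ = lam i * (r i : ℝ) := by
        intro i _
        rw [abs_of_nonneg (Real.rpow_nonneg (mul_nonneg (hlam i) (hri i).le) _),
          ← Real.rpow_mul (mul_nonneg (hlam i) (hri i).le),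
          mul_inv_cancel₀ hα0.ne', Real.rpow_one]
      have hg : ∀ i ∈ Finset.univ (α := Fin n),
          |(((r i : ℝ)) ^ 2 : ℝ) ^ (1 - α)| ^ (1-α)⁻¹ = ((r i : ℝ)) ^ 2 := by
        intro i _
        rw [abs_of_nonneg (Real.rpow_nonneg (hw i).le _), ← Real.rpow_mul (hw i).le,
          mul_inv_cancel₀ h1α, Real.rpow_one]
      rw [Finset.sum_congr rfl hf, Finset.sum_congr rfl hg, hsum] at key
      have hSle : S ≤ R ^ (1 - α) := by
        simpa [Real.one_rpow] using key
      have hlog : Real.logb 2 S ≤ Real.logb 2 (R ^ (1 - α)) :=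
        Real.logb_le_logb_of_le (by norm_num) hSpos hSle
      calc (1 - α)⁻¹ * Real.logb 2 S ≤ (1 - α)⁻¹ * Real.logb 2 (R ^ (1 - α)) :=
            mul_le_mul_of_nonneg_left hlog (by positivity)
        _ = Real.logb 2 R := by rw [hlogR, ← mul_assoc, inv_mul_cancel₀ h1α, one_mul]
    · -- α > 1 : Hölder gives R^(1-α) ≤ S
      have hα1' : α - 1 ≠ 0 := fun h => hα1 (by linarith)
      have hconj : Real.HolderConjugate α (α/(α-1)) := by
        rw [Real.holderConjugate_iff]
        constructor
        · exact hgt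
        · field_simp; ring
      have key := Real.inner_le_Lp_mul_Lq Finset.univ
        (fun i => (lam i * (r i : ℝ)) * (((r i : ℝ)) ^ 2 : ℝ) ^ ((1 - α)/α))
        (fun i => (((r i : ℝ)) ^ 2 : ℝ) ^ ((α - 1)/α)) hconj
      have hfg : ∀ i ∈ Finset.univ (α := Fin n),
          ((lam i * (r i : ℝ)) * (((r i : ℝ)) ^ 2 : ℝ) ^ ((1 - α)/α))
            * (((r i : ℝ)) ^ 2 : ℝ) ^ ((α - 1)/α) = lam i * (r i : ℝ) := by
        intro i _
        rw [mul_assoc, ← Real.rpow_add (hw i)]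
        have he : (1 - α)/α + (α - 1)/α = 0 := by field_simp; ring
        rw [he, Real.rpow_zero, mul_one]
      have hf : ∀ i ∈ Finset.univ (α := Fin n),
          |(lam i * (r i : ℝ)) * (((r i : ℝ)) ^ 2 : ℝ) ^ ((1 - α)/α)| ^ α
            = (lam i * (r i : ℝ)) ^ α * (((r i : ℝ)) ^ 2 : ℝ) ^ (1 - α) := by
        intro i _
        rw [abs_of_nonneg (mul_nonneg (mul_nonneg (hlam i) (hri i).le)
            (Real.rpow_nonneg (hw i).le _)),
          Real.mul_rpow (mul_nonneg (hlam i) (hri i).le) (Real.rpow_nonneg (hw i).le _),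
          ← Real.rpow_mul (hw i).le, div_mul_cancel₀ _ hα0.ne']
      have hg : ∀ i ∈ Finset.univ (α := Fin n),
          |(((r i : ℝ)) ^ 2 : ℝ) ^ ((α - 1)/α)| ^ (α/(α-1)) = ((r i : ℝ)) ^ 2 := by
        intro i _
        rw [abs_of_nonneg (by positivity), ← Real.rpow_mul (hw i).le]
        have he : (α - 1)/α * (α/(α-1)) = 1 := by field_simp
        rw [he, Real.rpow_one]
      rw [Finset.sum_congr rfl hfg, Finset.sum_congr rfl hf, Finset.sum_congr rfl hg,
        hsum] at key
      have hq : 1/(α/(α-1)) = (α-1)/α := by field_simp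
      rw [hq] at key
      have hRle : R ^ (1 - α) ≤ S := by
        have h1 : R ^ ((1 - α)/α) ≤ S ^ (1/α) := by
          have h2 : R ^ ((1-α)/α) * 1 ≤ R ^ ((1-α)/α) * (S ^ (1/α) * R ^ ((α-1)/α)) :=
            mul_le_mul_of_nonneg_left key (by positivity)
          calc R ^ ((1 - α)/α) = R ^ ((1-α)/α) * 1 := by ring
            _ ≤ R ^ ((1-α)/α) * (S ^ (1/α) * R ^ ((α-1)/α)) := h2
            _ = S ^ (1/α) * (R ^ ((1-α)/α) * R ^ ((α-1)/α)) := by ring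
            _ = S ^ (1/α) := by
                rw [← Real.rpow_add hRpos]
                have he : (1 - α)/α + (α - 1)/α = 0 := by field_simp; ring
                rw [he, Real.rpow_zero, mul_one]
        have h3 := Real.rpow_le_rpow (by positivity) h1 hα0.le
        rwa [← Real.rpow_mul hRpos.le, ← Real.rpow_mul hSpos.le,
          div_mul_cancel₀ _ hα0.ne', one_div, inv_mul_cancel₀ hα0.ne',
          Real.rpow_one] at h3
      have hlog : Real.logb 2 (R ^ (1 - α)) ≤ Real.logb 2 S :=
        Real.logb_le_logb_of_le (by norm_num) (by positivity) hRle
      have hneg : (1 - α)⁻¹ ≤ 0 := inv_nonpos.mpr (by linarith)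
      calc (1 - α)⁻¹ * Real.logb 2 S ≤ (1 - α)⁻¹ * Real.logb 2 (R ^ (1 - α)) :=
            mul_le_mul_of_nonpos_left hlog hneg
        _ = Real.logb 2 R := by rw [hlogR, ← mul_assoc, inv_mul_cancel₀ h1α, one_mul]
  · -- the equality case
    have hterm2 : ∀ i, ((r i : ℝ) / R) ^ α * (r i : ℝ) ^ (2 - α)
        = ((r i : ℝ)) ^ 2 / R ^ α := by
      intro i
      rw [Real.div_rpow (hri i).le hRpos.le, div_mul_eq_mul_div,
        ← Real.rpow_add (hri i),
        show α + (2 - α) = ((2:ℕ):ℝ) by push_cast; ring, Real.rpow_natCast]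
    rw [Finset.sum_congr rfl fun i _ => hterm2 i, ← Finset.sum_div, ← hRdef]
    have hRR : R / R ^ α = R ^ (1 - α) := by
      rw [Real.rpow_sub hRpos, Real.rpow_one]
    rw [hRR, hlogR, hrhs, ← mul_assoc, inv_mul_cancel₀ h1α, one_mul]
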